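/- Let Û₁, Û₂, U₁, U₂ ∈ ℝ^{n×d}, let O₁, O₂ be d×d orthogonal matrices, and let Ô be any d×d orthogonal matrix achieving the minimum of O ↦ ‖Û₂O − Û₁‖_F over the orthogonal group O(d). Then ‖Û₂Ô − U₂O₁‖_F ≤ 2‖Û₁ − U₁O₁‖_F + ‖Û₂ − U₂O₂‖_F + 2‖U₂ − U₁‖_F. -/

import Mathlib

open scoped Matrix

/-- Frobenius norm of a real matrix. -/
noncomputable def frob {m l : Type*} [Fintype m] [Fintype l] (A : Matrix m l ℝ) : ℝ :=
  Real.sqrt (∑ i, ∑ j, (A i j) ^ 2)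

noncomputable def toE {n d : ℕ} (A : Matrix (Fin n) (Fin d) ℝ) :
    EuclideanSpace ℝ (Fin n × Fin d) :=
  (WithLp.equiv 2 _).symm (fun p => A p.1 p.2)

lemma frob_eq {n d : ℕ} (A : Matrix (Fin n) (Fin d) ℝ) : frob A = ‖toE A‖ := by
  rw [EuclideanSpace.norm_eq, frob, Fintype.sum_prod_type]
  congr 1
  refine Finset.sum_congr rfl fun i _ => Finset.sum_congr rfl fun j _ => ?_
  simp [toE, Real.norm_eq_abs, sq_abs]

lemma frob_tri {n d : ℕ} (A B : Matrix (Fin n) (Fin d) ℝ) :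
    frob (A + B) ≤ frob A + frob B := by
  rw [frob_eq, frob_eq, frob_eq]
  have h : toE (A + B) = toE A + toE B := rfl
  rw [h]; exact norm_add_le _ _

lemma frob_sub_comm {n d : ℕ} (A B : Matrix (Fin n) (Fin d) ℝ) :
    frob (A - B) = frob (B - A) := by
  rw [frob_eq, frob_eq]
  have h : toE (A - B) = -(toE (B - A)) := by
    ext p; simp [toE]
  rw [h, norm_neg]

lemma frob_mul_orth {n d : ℕ} (A : Matrix (Fin n) (Fin d) ℝ)
    (Q : Matrix (Fin d) (Fin d) ℝ) (hQ : Qᵀ * Q = 1) : frob (A * Q) = frob A := by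
  have hQ' : Q * Qᵀ = 1 := mul_eq_one_comm.mp hQ
  unfold frob
  congr 1
  refine Finset.sum_congr rfl fun i _ => ?_
  have h1 : (A * Q * (A * Q)ᵀ) = A * Aᵀ := by
    rw [Matrix.transpose_mul, Matrix.mul_assoc, ← Matrix.mul_assoc Q Qᵀ Aᵀ, hQ',
      Matrix.one_mul]
  have h2 : ∀ (M : Matrix (Fin n) (Fin d) ℝ), (M * Mᵀ) i i = ∑ j, M i j ^ 2 := by
    intro M
    simp [Matrix.mul_apply, Matrix.transpose_apply, sq]
  rw [← h2 (A * Q), ← h2 A, h1]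

lemma frob_tri3 {n d : ℕ} (A B C D : Matrix (Fin n) (Fin d) ℝ) :
    frob (A - D) ≤ frob (A - B) + frob (B - C) + frob (C - D) := by
  have h1 : A - D = (A - B) + (B - C) + (C - D) := by abel
  rw [h1]
  calc frob ((A - B) + (B - C) + (C - D))
      ≤ frob ((A - B) + (B - C)) + frob (C - D) := frob_tri _ _
    _ ≤ frob (A - B) + frob (B - C) + frob (C - D) :=
        add_le_add_left (frob_tri _ _) _

/-- chain inequality for sequential Procrustes rotations.  If `Ô` minimizes
`O ↦ ‖Û₂O − Û₁‖_F` over the orthogonal group, then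
`‖Û₂Ô − U₂O₁‖_F ≤ 2‖Û₁ − U₁O₁‖_F + ‖Û₂ − U₂O₂‖_F + 2‖U₂ − U₁‖_F`. -/
theorem stmt_16 {n d : ℕ} (Uh₁ Uh₂ U₁ U₂ : Matrix (Fin n) (Fin d) ℝ)
    (O₁ O₂ Oh : Matrix (Fin d) (Fin d) ℝ)
    (hO₁ : O₁ᵀ * O₁ = 1) (hO₂ : O₂ᵀ * O₂ = 1) (hOh : Ohᵀ * Oh = 1)
    (hmin : ∀ O : Matrix (Fin d) (Fin d) ℝ, Oᵀ * O = 1 →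
      frob (Uh₂ * Oh - Uh₁) ≤ frob (Uh₂ * O - Uh₁)) :
    frob (Uh₂ * Oh - U₂ * O₁) ≤
      2 * frob (Uh₁ - U₁ * O₁) + frob (Uh₂ - U₂ * O₂) + 2 * frob (U₂ - U₁) := by
  have hO₂' : O₂ * O₂ᵀ = 1 := mul_eq_one_comm.mp hO₂
  have hO₂T : (O₂ᵀ)ᵀ * O₂ᵀ = 1 := by rw [Matrix.transpose_transpose]; exact hO₂'
  -- Q = O₂ᵀ * O₁ is orthogonal
  have hQ : (O₂ᵀ * O₁)ᵀ * (O₂ᵀ * O₁) = 1 := by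
    rw [Matrix.transpose_mul, Matrix.transpose_transpose, Matrix.mul_assoc,
      ← Matrix.mul_assoc O₂ O₂ᵀ O₁, hO₂', Matrix.one_mul, hO₁]
  -- bound on the Procrustes residual
  have h1 : frob (Uh₂ * Oh - Uh₁) ≤
      frob (Uh₂ - U₂ * O₂) + frob (U₂ - U₁) + frob (Uh₁ - U₁ * O₁) := by
    have hm := hmin (O₂ᵀ * O₁) hQ
    have h3 : frob (Uh₂ * (O₂ᵀ * O₁) - Uh₁) ≤
        frob (Uh₂ * (O₂ᵀ * O₁) - U₂ * O₁) + frob (U₂ * O₁ - U₁ * O₁)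
          + frob (U₁ * O₁ - Uh₁) := frob_tri3 _ _ _ _
    have e1 : frob (Uh₂ * (O₂ᵀ * O₁) - U₂ * O₁) = frob (Uh₂ - U₂ * O₂) := by
      have : Uh₂ * (O₂ᵀ * O₁) - U₂ * O₁ = (Uh₂ * O₂ᵀ - U₂) * O₁ := by
        rw [Matrix.sub_mul, Matrix.mul_assoc]
      rw [this, frob_mul_orth _ _ hO₁]
      have : Uh₂ * O₂ᵀ - U₂ = (Uh₂ - U₂ * O₂) * O₂ᵀ := by
        rw [Matrix.sub_mul, Matrix.mul_assoc, hO₂', Matrix.mul_one]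
      rw [this, frob_mul_orth _ _ hO₂T]
    have e2 : frob (U₂ * O₁ - U₁ * O₁) = frob (U₂ - U₁) := by
      rw [← Matrix.sub_mul, frob_mul_orth _ _ hO₁]
    have e3 : frob (U₁ * O₁ - Uh₁) = frob (Uh₁ - U₁ * O₁) := frob_sub_comm _ _
    rw [e1, e2, e3] at h3
    exact le_trans hm h3
  have h2 : frob (Uh₂ * Oh - U₂ * O₁) ≤
      frob (Uh₂ * Oh - Uh₁) + frob (Uh₁ - U₁ * O₁) + frob (U₁ * O₁ - U₂ * O₁) :=
    frob_tri3 _ _ _ _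
  have e4 : frob (U₁ * O₁ - U₂ * O₁) = frob (U₂ - U₁) := by
    rw [← Matrix.sub_mul, frob_mul_orth _ _ hO₁, frob_sub_comm]
  rw [e4] at h2
  calc frob (Uh₂ * Oh - U₂ * O₁)
      ≤ frob (Uh₂ * Oh - Uh₁) + frob (Uh₁ - U₁ * O₁) + frob (U₂ - U₁) := h2
    _ ≤ (frob (Uh₂ - U₂ * O₂) + frob (U₂ - U₁) + frob (Uh₁ - U₁ * O₁))
          + frob (Uh₁ - U₁ * O₁) + frob (U₂ - U₁) := by
        gcongr
    _ = 2 * frob (Uh₁ - U₁ * O₁) + frob (Uh₂ - U₂ * O₂) + 2 * frob (U₂ - U₁) := by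
        ring
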